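/- McDiarmid's martingale inequality with conditional variance: Let {Zₖ}_{k=0}^n be a real-valued martingale with increments ξₖ = Zₖ − Z_{k−1} satisfying, for constants d, σ > 0: |ξₖ| ≤ d almost surely, and E[ξₖ² | ℱ_{k−1}] ≤ σ² almost surely, for all k. Then for every α with 0 ≤ α ≤ d, P[|Zₙ − Z₀| ≥ αn] ≤ 2·exp(−n·d_b((δ+γ)/(1+γ) ‖ γ/(1+γ))), where γ = σ²/d², δ = α/d, and d_b(p‖q) = p·ln(p/q) + (1−p)·ln((1−p)/(1−q)) is the binary relative entropy (in nats). -/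

import Mathlib

open MeasureTheory ProbabilityTheory Real

/-- The binary relative entropy (in nats) between `Bernoulli p` and `Bernoulli q`:
`d_b(p‖q) = p log(p/q) + (1-p) log((1-p)/(1-q))`. -/
noncomputable def binRelEntropy (p q : ℝ) : ℝ :=
  p * Real.log (p / q) + (1 - p) * Real.log ((1 - p) / (1 - q))

lemma myG_eq (u : ℝ) :
    u ^ 2 * ∫ t in (0:ℝ)..1, (1 - t) * Real.exp (t * u) = Real.exp u - 1 - u := by
  rcases eq_or_ne u 0 with h | h
  · simp [h]
  · have key : ∀ t ∈ Set.uIcc (0:ℝ) 1,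
        HasDerivAt (fun t => Real.exp (t * u) * ((1 - t) / u + 1 / u ^ 2))
          ((1 - t) * Real.exp (t * u)) t := by
      intro t _
      have h1 : HasDerivAt (fun t : ℝ => t * u) u t := by simpa using (hasDerivAt_id t).mul_const u
      have h2 : HasDerivAt (fun t : ℝ => (1 - t) / u + 1 / u ^ 2) (-1 / u) t := by
        exact (((hasDerivAt_id t).const_sub 1).div_const u).add_const (1 / u ^ 2)
      have : HasDerivAt (fun t => Real.exp (t * u) * ((1 - t) / u + 1 / u ^ 2)) (Real.exp (t * u) * u * ((1 - t) / u + 1 / u ^ 2) + Real.exp (t * u) * (-1 / u)) t := (h1.exp.mul h2)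
      convert this using 1
      field_simp
      ring
    have hint : IntervalIntegrable (fun t => (1 - t) * Real.exp (t * u)) volume 0 1 :=
      (Continuous.mul (by continuity) (by continuity)).intervalIntegrable 0 1
    rw [intervalIntegral.integral_eq_sub_of_hasDerivAt key hint]
    field_simp
    simp only [zero_mul, mul_zero, Real.exp_zero]
    ring

lemma myG_mono {u v : ℝ} (h : u ≤ v) :
    ∫ t in (0:ℝ)..1, (1 - t) * Real.exp (t * u) ≤ ∫ t in (0:ℝ)..1, (1 - t) * Real.exp (t * v) := by
  apply intervalIntegral.integral_mono_on (by norm_num)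
    ((Continuous.mul (by continuity) (by continuity)).intervalIntegrable 0 1)
    ((Continuous.mul (by continuity) (by continuity)).intervalIntegrable 0 1)
  intro t ht
  rcases ht with ⟨ht0, ht1⟩
  have : Real.exp (t * u) ≤ Real.exp (t * v) := by
    apply Real.exp_le_exp.2
    exact mul_le_mul_of_nonneg_left h ht0
  show (1 - t) * Real.exp (t * u) ≤ (1 - t) * Real.exp (t * v)
  nlinarith [Real.exp_pos (t * u)]

lemma psi_key {u v : ℝ} (h : u ≤ v) :
    v ^ 2 * (Real.exp u - 1 - u) ≤ u ^ 2 * (Real.exp v - 1 - v) := by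
  have h1 := myG_eq u
  have h2 := myG_eq v
  have h3 := mul_le_mul_of_nonneg_left (myG_mono h)
    (mul_nonneg (sq_nonneg u) (sq_nonneg v))
  nlinarith [h1, h2, h3]

lemma exp_le_quadratic {l r d x : ℝ} (hl : 0 ≤ l) (hr : 0 < r) (hd : 0 < d) (hx : x ≤ d) :
    Real.exp (l * x) ≤ Real.exp (-(l * r)) * (1 + l * (x + r))
      + (Real.exp (l * d) - Real.exp (-(l * r)) * (1 + l * (d + r))) / (d + r) ^ 2
          * (x + r) ^ 2 := by
  rcases eq_or_lt_of_le hl with h0 | hl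
  · simp [← h0]
  have hdr : (0:ℝ) < d + r := by linarith
  have e1 : Real.exp (l * x) = Real.exp (-(l * r)) * Real.exp (l * (x + r)) := by
    rw [← Real.exp_add]; ring_nf
  have e2 : Real.exp (l * d) = Real.exp (-(l * r)) * Real.exp (l * (d + r)) := by
    rw [← Real.exp_add]; ring_nf
  have hpsi := psi_key (u := l * (x + r)) (v := l * (d + r))
    (by nlinarith)
  have hE : (0:ℝ) < Real.exp (-(l * r)) := Real.exp_pos _
  have key : Real.exp (l * x) * (d + r) ^ 2 ≤
      Real.exp (-(l * r)) * (1 + l * (x + r)) * (d + r) ^ 2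
        + (Real.exp (l * d) - Real.exp (-(l * r)) * (1 + l * (d + r))) * (x + r) ^ 2 := by
    rw [e1, e2]
    have H := mul_le_mul_of_nonneg_left hpsi hE.le
    have hl2 : (0:ℝ) < l ^ 2 := by positivity
    rw [← mul_le_mul_iff_right₀ hl2]
    nlinarith [H]
  calc Real.exp (l * x)
      = Real.exp (l * x) * (d + r) ^ 2 / (d + r) ^ 2 := by field_simp
    _ ≤ (Real.exp (-(l * r)) * (1 + l * (x + r)) * (d + r) ^ 2
        + (Real.exp (l * d) - Real.exp (-(l * r)) * (1 + l * (d + r))) * (x + r) ^ 2)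
          / (d + r) ^ 2 := by gcongr
    _ = _ := by field_simp

lemma condexp_le_of_quadratic {Ω : Type*} {m0 : MeasurableSpace Ω} {μ : Measure Ω}
    [IsProbabilityMeasure μ] {m : MeasurableSpace Ω} (hm : m ≤ m0)
    {X : Ω → ℝ} (hXint : Integrable X μ) (hX0 : μ[X|m] =ᵐ[μ] 0)
    {d σ2 l : ℝ} (hd : 0 < d)
    (hXb : ∀ᵐ ω ∂μ, |X ω| ≤ d)
    (hX2 : ∀ᵐ ω ∂μ, (μ[fun ω' => X ω' ^ 2|m]) ω ≤ σ2)
    {a b c : ℝ} (hc : 0 ≤ c)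
    (hq : ∀ᵐ ω ∂μ, Real.exp (l * X ω) ≤ a + b * X ω + c * X ω ^ 2) :
    ∀ᵐ ω ∂μ, (μ[fun ω' => Real.exp (l * X ω')|m]) ω ≤ a + c * σ2 := by
  have hXsm := hXint.aestronglyMeasurable
  have hexp_int : Integrable (fun ω => Real.exp (l * X ω)) μ := by
    apply Integrable.mono' (integrable_const (Real.exp (|l| * d)))
    · exact (Real.continuous_exp.comp (continuous_const.mul continuous_id)).comp_aestronglyMeasurable hXsm
    · filter_upwards [hXb] with ω hω
      rw [Real.norm_eq_abs, Real.abs_exp, Real.exp_le_exp]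
      calc l * X ω ≤ |l * X ω| := le_abs_self _
        _ = |l| * |X ω| := abs_mul _ _
        _ ≤ |l| * d := by gcongr
  have hX2int : Integrable (fun ω => X ω ^ 2) μ := by
    apply Integrable.mono' (integrable_const (d ^ 2))
    · exact (continuous_pow 2).comp_aestronglyMeasurable hXsm
    · filter_upwards [hXb] with ω hω
      rw [Real.norm_eq_abs, abs_pow]
      gcongr
  have hquad_int : Integrable (fun ω => a + b * X ω + c * X ω ^ 2) μ :=
    ((integrable_const a).add (hXint.const_mul b)).add (hX2int.const_mul c)
  have h1 := condExp_mono (μ := μ) (m := m) hexp_int hquad_int hq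
  have hbX : μ[fun ω => b * X ω|m] =ᵐ[μ] fun ω => b * (μ[X|m]) ω := by
    simpa [Pi.smul_def, Pi.smul_apply, smul_eq_mul] using condExp_smul (μ := μ) (m := m) b X
  have hcX : μ[fun ω => c * X ω ^ 2|m] =ᵐ[μ] fun ω => c * (μ[fun ω' => X ω' ^ 2|m]) ω := by
    simpa [Pi.smul_def, Pi.smul_apply, smul_eq_mul] using condExp_smul (μ := μ) (m := m) c (fun ω => X ω ^ 2)
  have e1 : μ[fun ω => a + b * X ω + c * X ω ^ 2|m] =ᵐ[μ]
      μ[fun ω => a + b * X ω|m] + μ[fun ω => c * X ω ^ 2|m] :=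
    condExp_add (μ := μ) (m := m) ((integrable_const a).add (hXint.const_mul b))
      (hX2int.const_mul c)
  have e2 : μ[fun ω => a + b * X ω|m] =ᵐ[μ] μ[fun _ => a|m] + μ[fun ω => b * X ω|m] :=
    condExp_add (μ := μ) (m := m) (integrable_const a) (hXint.const_mul b)
  have e3 : μ[fun _ : Ω => a|m] = fun _ => a := condExp_const hm a
  filter_upwards [h1, e1, e2, hbX, hcX, hX0, hX2] with ω h1ω e1ω e2ω hbω hcω h0ω h2ω
  have hX0ω : (μ[X|m]) ω = 0 := h0ω
  calc (μ[fun ω' => Real.exp (l * X ω')|m]) ω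
      ≤ (μ[fun ω => a + b * X ω + c * X ω ^ 2|m]) ω := h1ω
    _ = (μ[fun ω => a + b * X ω|m]) ω + (μ[fun ω => c * X ω ^ 2|m]) ω := by
        rw [e1ω]; simp [Pi.add_apply]
    _ = a + b * (μ[X|m]) ω + c * (μ[fun ω' => X ω' ^ 2|m]) ω := by
        rw [e2ω, hcω]; simp [Pi.add_apply, e3, hbω]
    _ ≤ a + c * σ2 := by
        rw [hX0ω]
        have := mul_le_mul_of_nonneg_left h2ω hc
        linarith

lemma condexp_exp_le_M {Ω : Type*} {m0 : MeasurableSpace Ω} {μ : Measure Ω}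
    [IsProbabilityMeasure μ] {m : MeasurableSpace Ω} (hm : m ≤ m0)
    {X : Ω → ℝ} (hXint : Integrable X μ) (hX0 : μ[X|m] =ᵐ[μ] 0)
    {d σ l : ℝ} (hd : 0 < d) (hσ : 0 < σ) (hl : 0 ≤ l)
    (hXb : ∀ᵐ ω ∂μ, |X ω| ≤ d)
    (hX2 : ∀ᵐ ω ∂μ, (μ[fun ω' => X ω' ^ 2|m]) ω ≤ σ ^ 2) :
    ∀ᵐ ω ∂μ, (μ[fun ω' => Real.exp (l * X ω')|m]) ω ≤
      (σ ^ 2 / d ^ 2 * Real.exp (l * d) + Real.exp (-(l * (σ ^ 2 / d)))) / (1 + σ ^ 2 / d ^ 2) := by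
  set r : ℝ := σ ^ 2 / d with hr_def
  have hr : 0 < r := by positivity
  have hdr : (0:ℝ) < d + r := by linarith
  set C : ℝ := (Real.exp (l * d) - Real.exp (-(l * r)) * (1 + l * (d + r))) / (d + r) ^ 2
    with hC_def
  have hC0 : 0 ≤ C := by
    apply div_nonneg _ (by positivity)
    have h1 : Real.exp (l * d) = Real.exp (-(l * r)) * Real.exp (l * (d + r)) := by
      rw [← Real.exp_add]; ring_nf
    have h2 : 1 + l * (d + r) ≤ Real.exp (l * (d + r)) := by
      have := Real.add_one_le_exp (l * (d + r))
      linarith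
    rw [h1]
    nlinarith [Real.exp_pos (-(l * r))]
  have hq : ∀ᵐ ω ∂μ, Real.exp (l * X ω) ≤
      (Real.exp (-(l * r)) * (1 + l * r) + C * r ^ 2)
        + (Real.exp (-(l * r)) * l + 2 * C * r) * X ω + C * X ω ^ 2 := by
    filter_upwards [hXb] with ω hω
    have hx : X ω ≤ d := (abs_le.1 hω).2
    calc Real.exp (l * X ω)
        ≤ Real.exp (-(l * r)) * (1 + l * (X ω + r)) + C * (X ω + r) ^ 2 :=
          exp_le_quadratic hl hr hd hx
      _ = Real.exp (-(l * r)) * (1 + l * r) + C * r ^ 2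
            + (Real.exp (-(l * r)) * l + 2 * C * r) * X ω + C * X ω ^ 2 := by ring
  have key := condexp_le_of_quadratic (l := l) hm hXint hX0 hd hXb hX2 hC0 hq
  filter_upwards [key] with ω hω
  refine hω.trans (le_of_eq ?_)
  rw [hC_def, hr_def]
  field_simp
  ring

lemma abs_diff_le {Ω : Type*} {m0 : MeasurableSpace Ω} {μ : Measure Ω}
    [IsProbabilityMeasure μ] {Z : ℕ → Ω → ℝ}
    {n : ℕ} {d : ℝ}
    (hbdd : ∀ k, 1 ≤ k → k ≤ n → ∀ᵐ ω ∂μ, |Z k ω - Z (k - 1) ω| ≤ d) :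
    ∀ j, j ≤ n → ∀ᵐ ω ∂μ, |Z j ω - Z 0 ω| ≤ j * d := by
  intro j
  induction j with
  | zero => intro _; filter_upwards with ω; simp
  | succ j ih =>
    intro hjn
    have h1 := ih (Nat.le_of_succ_le hjn)
    have h2 := hbdd (j + 1) (Nat.le_add_left 1 j) hjn
    filter_upwards [h1, h2] with ω hω1 hω2
    have : (j + 1 : ℕ) - 1 = j := by omega
    rw [this] at hω2
    calc |Z (j + 1) ω - Z 0 ω| ≤ |Z (j + 1) ω - Z j ω| + |Z j ω - Z 0 ω| := by
          have := abs_sub_le (Z (j + 1) ω) (Z j ω) (Z 0 ω); linarith [abs_sub_le (Z (j+1) ω) (Z j ω) (Z 0 ω)]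
      _ ≤ d + j * d := by gcongr
      _ = (j + 1 : ℕ) * d := by push_cast; ring

lemma integral_exp_le {Ω : Type*} {m0 : MeasurableSpace Ω} {μ : Measure Ω}
    [IsProbabilityMeasure μ] {ℱ : Filtration ℕ m0} {Z : ℕ → Ω → ℝ}
    (hmart : Martingale Z ℱ μ) {n : ℕ} {d σ l : ℝ} (hd : 0 < d) (hσ : 0 < σ) (hl : 0 ≤ l)
    (hbdd : ∀ k, 1 ≤ k → k ≤ n → ∀ᵐ ω ∂μ, |Z k ω - Z (k - 1) ω| ≤ d)
    (hvar : ∀ k, 1 ≤ k → k ≤ n →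
      ∀ᵐ ω ∂μ, (μ[(fun ω' => (Z k ω' - Z (k - 1) ω') ^ 2) | ℱ (k - 1)]) ω ≤ σ ^ 2) :
    ∀ j, j ≤ n → Integrable (fun ω => Real.exp (l * (Z j ω - Z 0 ω))) μ ∧
      ∫ ω, Real.exp (l * (Z j ω - Z 0 ω)) ∂μ ≤
        ((σ ^ 2 / d ^ 2 * Real.exp (l * d) + Real.exp (-(l * (σ ^ 2 / d))))
          / (1 + σ ^ 2 / d ^ 2)) ^ j := by
  set M : ℝ := (σ ^ 2 / d ^ 2 * Real.exp (l * d) + Real.exp (-(l * (σ ^ 2 / d))))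
    / (1 + σ ^ 2 / d ^ 2) with hM_def
  have hM0 : 0 ≤ M := by positivity
  have hint : ∀ j, j ≤ n → Integrable (fun ω => Real.exp (l * (Z j ω - Z 0 ω))) μ := by
    intro j hj
    apply Integrable.mono' (integrable_const (Real.exp (|l| * (j * d))))
    · exact (Real.continuous_exp.comp (continuous_const.mul continuous_id)).comp_aestronglyMeasurable
        (((hmart.integrable j).sub (hmart.integrable 0)).aestronglyMeasurable)
    · filter_upwards [abs_diff_le hbdd j hj] with ω hω
      rw [Real.norm_eq_abs, Real.abs_exp, Real.exp_le_exp]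
      calc l * (Z j ω - Z 0 ω) ≤ |l * (Z j ω - Z 0 ω)| := le_abs_self _
        _ = |l| * |Z j ω - Z 0 ω| := abs_mul _ _
        _ ≤ |l| * (j * d) := by gcongr
  intro j
  induction j with
  | zero =>
    intro _
    refine ⟨hint 0 (Nat.zero_le n), ?_⟩
    simp
  | succ j ih =>
    intro hjn
    have hjn' : j ≤ n := Nat.le_of_succ_le hjn
    obtain ⟨hf_int, hIH⟩ := ih hjn'
    refine ⟨hint (j + 1) hjn, ?_⟩
    set f : Ω → ℝ := fun ω => Real.exp (l * (Z j ω - Z 0 ω)) with hf_def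
    set g : Ω → ℝ := fun ω => Real.exp (l * (Z (j + 1) ω - Z j ω)) with hg_def
    have hfg : (fun ω => Real.exp (l * (Z (j + 1) ω - Z 0 ω))) = f * g := by
      funext ω
      rw [Pi.mul_apply, hf_def, hg_def, ← Real.exp_add]
      ring_nf
    -- increment facts
    have hξint : Integrable (fun ω => Z (j + 1) ω - Z j ω) μ :=
      (hmart.integrable (j + 1)).sub (hmart.integrable j)
    have hsucc : (j + 1 : ℕ) - 1 = j := by omega
    have hξb : ∀ᵐ ω ∂μ, |Z (j + 1) ω - Z j ω| ≤ d := by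
      have := hbdd (j + 1) (Nat.le_add_left 1 j) hjn
      rwa [hsucc] at this
    have hξ2 : ∀ᵐ ω ∂μ, (μ[(fun ω' => (Z (j + 1) ω' - Z j ω') ^ 2) | ℱ j]) ω ≤ σ ^ 2 := by
      have := hvar (j + 1) (Nat.le_add_left 1 j) hjn
      rwa [hsucc] at this
    have hξ0 : μ[fun ω => Z (j + 1) ω - Z j ω|ℱ j] =ᵐ[μ] 0 := by
      have h1 : μ[fun ω => Z (j + 1) ω - Z j ω|ℱ j] =ᵐ[μ] μ[Z (j + 1)|ℱ j] - μ[Z j|ℱ j] :=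
        condExp_sub (hmart.integrable (j + 1)) (hmart.integrable j) (ℱ j)
      have h2 := hmart.condExp_ae_eq (Nat.le_succ j)
      have h3 := hmart.condExp_ae_eq (le_refl j)
      filter_upwards [h1, h2, h3] with ω e1 e2 e3
      simp only [Pi.sub_apply] at e1 ⊢
      rw [e1, e2, e3]
      simp
    have hM := condexp_exp_le_M (ℱ.le j) hξint hξ0 hd hσ hl hξb hξ2
    -- measurability of f wrt ℱ j
    have hf_sm : StronglyMeasurable[ℱ j] f := by
      apply Real.continuous_exp.comp_stronglyMeasurable
      exact ((hmart.stronglyAdapted j).sub ((hmart.stronglyAdapted 0).mono (ℱ.mono (Nat.zero_le j)))).const_mul l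
    have hg_int : Integrable g μ := by
      apply Integrable.mono' (integrable_const (Real.exp (|l| * d)))
      · exact (Real.continuous_exp.comp (continuous_const.mul continuous_id)).comp_aestronglyMeasurable
          hξint.aestronglyMeasurable
      · filter_upwards [hξb] with ω hω
        rw [Real.norm_eq_abs, Real.abs_exp, Real.exp_le_exp]
        calc l * (Z (j + 1) ω - Z j ω) ≤ |l * (Z (j + 1) ω - Z j ω)| := le_abs_self _
          _ = |l| * |Z (j + 1) ω - Z j ω| := abs_mul _ _
          _ ≤ |l| * d := by gcongr
    have hfg_int : Integrable (f * g) μ := by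
      rw [← hfg]; exact hint (j + 1) hjn
    have hpull : μ[f * g|ℱ j] =ᵐ[μ] f * μ[g|ℱ j] :=
      condExp_mul_of_stronglyMeasurable_left hf_sm hfg_int hg_int
    have hfM_int : Integrable (fun ω => f ω * M) μ := hf_int.mul_const M
    have hcond_int : Integrable (fun ω => f ω * (μ[g|ℱ j]) ω) μ := by
      apply (integrable_condExp (m := ℱ j) (f := f * g)).congr
      filter_upwards [hpull] with ω hω
      rw [hω]; rfl
    calc ∫ ω, Real.exp (l * (Z (j + 1) ω - Z 0 ω)) ∂μ
        = ∫ ω, (f * g) ω ∂μ := by rw [hfg]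
      _ = ∫ ω, (μ[f * g|ℱ j]) ω ∂μ := (integral_condExp (ℱ.le j)).symm
      _ = ∫ ω, f ω * (μ[g|ℱ j]) ω ∂μ := integral_congr_ae (by
            filter_upwards [hpull] with ω hω
            rw [hω]; rfl)
      _ ≤ ∫ ω, f ω * M ∂μ := by
            apply integral_mono_ae hcond_int hfM_int
            filter_upwards [hM] with ω hω
            exact mul_le_mul_of_nonneg_left hω (Real.exp_nonneg _)
      _ = (∫ ω, f ω ∂μ) * M := integral_mul_const M f
      _ ≤ M ^ j * M := by
            apply mul_le_mul_of_nonneg_right hIH hM0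
      _ = M ^ (j + 1) := by ring

lemma oneSided {Ω : Type*} {m0 : MeasurableSpace Ω} {μ : Measure Ω}
    [IsProbabilityMeasure μ] {ℱ : Filtration ℕ m0} {Z : ℕ → Ω → ℝ}
    (hmart : Martingale Z ℱ μ) {n : ℕ} {d σ l : ℝ} (hd : 0 < d) (hσ : 0 < σ) (hl : 0 ≤ l)
    (hbdd : ∀ k, 1 ≤ k → k ≤ n → ∀ᵐ ω ∂μ, |Z k ω - Z (k - 1) ω| ≤ d)
    (hvar : ∀ k, 1 ≤ k → k ≤ n →
      ∀ᵐ ω ∂μ, (μ[(fun ω' => (Z k ω' - Z (k - 1) ω') ^ 2) | ℱ (k - 1)]) ω ≤ σ ^ 2)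
    (ε : ℝ) :
    μ {ω | ε ≤ Z n ω - Z 0 ω} ≤
      ENNReal.ofReal (Real.exp (-l * ε) *
        ((σ ^ 2 / d ^ 2 * Real.exp (l * d) + Real.exp (-(l * (σ ^ 2 / d))))
          / (1 + σ ^ 2 / d ^ 2)) ^ n) := by
  obtain ⟨hint, hbound⟩ := integral_exp_le hmart hd hσ hl hbdd hvar n (le_refl n)
  have key := ProbabilityTheory.measure_ge_le_exp_mul_mgf (μ := μ)
    (X := fun ω => Z n ω - Z 0 ω) (t := l) ε hl hint
  have hmgf : ProbabilityTheory.mgf (fun ω => Z n ω - Z 0 ω) μ l =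
      ∫ ω, Real.exp (l * (Z n ω - Z 0 ω)) ∂μ := rfl
  rw [hmgf] at key
  have h2 : (μ {ω | ε ≤ Z n ω - Z 0 ω}).toReal ≤ Real.exp (-l * ε) *
      ((σ ^ 2 / d ^ 2 * Real.exp (l * d) + Real.exp (-(l * (σ ^ 2 / d))))
          / (1 + σ ^ 2 / d ^ 2)) ^ n := by
    refine key.trans ?_
    exact mul_le_mul_of_nonneg_left hbound (Real.exp_nonneg _)
  calc μ {ω | ε ≤ Z n ω - Z 0 ω}
      = ENNReal.ofReal ((μ {ω | ε ≤ Z n ω - Z 0 ω}).toReal) :=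
        (ENNReal.ofReal_toReal (measure_ne_top μ _)).symm
    _ ≤ _ := ENNReal.ofReal_le_ofReal h2

lemma twoSided {Ω : Type*} {m0 : MeasurableSpace Ω} {μ : Measure Ω}
    [IsProbabilityMeasure μ] {ℱ : Filtration ℕ m0} {Z : ℕ → Ω → ℝ}
    (hmart : Martingale Z ℱ μ) {n : ℕ} {d σ l : ℝ} (hd : 0 < d) (hσ : 0 < σ) (hl : 0 ≤ l)
    (hbdd : ∀ k, 1 ≤ k → k ≤ n → ∀ᵐ ω ∂μ, |Z k ω - Z (k - 1) ω| ≤ d)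
    (hvar : ∀ k, 1 ≤ k → k ≤ n →
      ∀ᵐ ω ∂μ, (μ[(fun ω' => (Z k ω' - Z (k - 1) ω') ^ 2) | ℱ (k - 1)]) ω ≤ σ ^ 2)
    (ε : ℝ) :
    μ {ω | ε ≤ |Z n ω - Z 0 ω|} ≤
      ENNReal.ofReal (2 * (Real.exp (-l * ε) *
        ((σ ^ 2 / d ^ 2 * Real.exp (l * d) + Real.exp (-(l * (σ ^ 2 / d))))
          / (1 + σ ^ 2 / d ^ 2)) ^ n)) := by
  have hneg : Martingale (-Z) ℱ μ := hmart.neg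
  have hbdd' : ∀ k, 1 ≤ k → k ≤ n → ∀ᵐ ω ∂μ, |(-Z) k ω - (-Z) (k - 1) ω| ≤ d := by
    intro k hk1 hkn
    filter_upwards [hbdd k hk1 hkn] with ω hω
    have : (-Z) k ω - (-Z) (k - 1) ω = -(Z k ω - Z (k - 1) ω) := by
      simp only [Pi.neg_apply]; ring
    rw [this, abs_neg]
    exact hω
  have hvar' : ∀ k, 1 ≤ k → k ≤ n →
      ∀ᵐ ω ∂μ, (μ[(fun ω' => ((-Z) k ω' - (-Z) (k - 1) ω') ^ 2) | ℱ (k - 1)]) ω ≤ σ ^ 2 := by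
    intro k hk1 hkn
    have heq : (fun ω' => ((-Z) k ω' - (-Z) (k - 1) ω') ^ 2)
        = (fun ω' => (Z k ω' - Z (k - 1) ω') ^ 2) := by
      funext ω'; simp only [Pi.neg_apply]; ring
    rw [heq]
    exact hvar k hk1 hkn
  have h1 := oneSided hmart hd hσ hl hbdd hvar ε
  have h2 := oneSided hneg hd hσ hl hbdd' hvar' ε
  have hsub : {ω | ε ≤ |Z n ω - Z 0 ω|} ⊆
      {ω | ε ≤ Z n ω - Z 0 ω} ∪ {ω | ε ≤ (-Z) n ω - (-Z) 0 ω} := by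
    intro ω hω
    simp only [Set.mem_setOf_eq] at hω
    rcases le_abs.1 hω with h | h
    · exact Or.inl h
    · right; simp only [Set.mem_setOf_eq, Pi.neg_apply]; linarith
  set B : ℝ := Real.exp (-l * ε) *
        ((σ ^ 2 / d ^ 2 * Real.exp (l * d) + Real.exp (-(l * (σ ^ 2 / d))))
          / (1 + σ ^ 2 / d ^ 2)) ^ n with hB_def
  have hB0 : 0 ≤ B := by positivity
  calc μ {ω | ε ≤ |Z n ω - Z 0 ω|}
      ≤ μ ({ω | ε ≤ Z n ω - Z 0 ω} ∪ {ω | ε ≤ (-Z) n ω - (-Z) 0 ω}) := measure_mono hsub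
    _ ≤ μ {ω | ε ≤ Z n ω - Z 0 ω} + μ {ω | ε ≤ (-Z) n ω - (-Z) 0 ω} := measure_union_le _ _
    _ ≤ ENNReal.ofReal B + ENNReal.ofReal B := add_le_add h1 h2
    _ = ENNReal.ofReal (2 * B) := by
        rw [← ENNReal.ofReal_add hB0 hB0]; ring_nf


/-- **McDiarmid's martingale inequality with conditional variance**: let `Z 0, …, Z n` be a
real-valued martingale with respect to a filtration `ℱ` whose increments
`ξ k = Z k - Z (k-1)` satisfy, for constants `d, σ > 0`: `|ξ k| ≤ d` a.s. and
`E[ξ k ² | ℱ (k-1)] ≤ σ²` a.s., for all `k ∈ {1, …, n}`.  Then for every `α ∈ [0, d]`,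
`P[|Z n - Z 0| ≥ α n] ≤ 2 exp (-n d_b((δ+γ)/(1+γ) ‖ γ/(1+γ)))`, where `γ = σ²/d²` and
`δ = α/d`. -/
theorem mcdiarmid_martingale_conditional_variance
    {Ω : Type*} {m0 : MeasurableSpace Ω} (μ : Measure Ω) [IsProbabilityMeasure μ]
    (ℱ : Filtration ℕ m0) (Z : ℕ → Ω → ℝ) (hmart : Martingale Z ℱ μ)
    (n : ℕ) (d σ : ℝ) (hd : 0 < d) (hσ : 0 < σ)
    (hbdd : ∀ k, 1 ≤ k → k ≤ n → ∀ᵐ ω ∂μ, |Z k ω - Z (k - 1) ω| ≤ d)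
    (hvar : ∀ k, 1 ≤ k → k ≤ n →
      ∀ᵐ ω ∂μ, (μ[(fun ω' => (Z k ω' - Z (k - 1) ω') ^ 2) | ℱ (k - 1)]) ω ≤ σ ^ 2)
    (α : ℝ) (hα0 : 0 ≤ α) (hαd : α ≤ d) :
    μ {ω | α * n ≤ |Z n ω - Z 0 ω|}
      ≤ ENNReal.ofReal (2 * Real.exp (-(n *
          binRelEntropy ((α / d + σ ^ 2 / d ^ 2) / (1 + σ ^ 2 / d ^ 2))
            ((σ ^ 2 / d ^ 2) / (1 + σ ^ 2 / d ^ 2))))) := by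
  set γ : ℝ := σ ^ 2 / d ^ 2 with hγ_def
  set δ : ℝ := α / d with hδ_def
  have hγ0 : 0 < γ := by rw [hγ_def]; positivity
  have h1γ : (0:ℝ) < 1 + γ := by linarith
  have hδ0 : 0 ≤ δ := by rw [hδ_def]; positivity
  have hδ1 : δ ≤ 1 := by rw [hδ_def, div_le_one hd]; exact hαd
  have hα_eq : α = δ * d := by rw [hδ_def]; field_simp
  have hσd : σ ^ 2 / d = γ * d := by rw [hγ_def]; field_simp
  rcases lt_or_eq_of_le hδ1 with hδlt | hδeq
  · -- case δ < 1
    have h1δ : (0:ℝ) < 1 - δ := by linarith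
    set u : ℝ := (δ + γ) / (γ * (1 - δ)) with hu_def
    have hu0 : 0 < u := by rw [hu_def]; positivity
    have hu1 : 1 ≤ u := by
      rw [hu_def, le_div_iff₀ (by positivity)]
      nlinarith
    set l : ℝ := Real.log u / (d * (1 + γ)) with hl_def
    have hl : 0 ≤ l := by
      rw [hl_def]
      exact div_nonneg (Real.log_nonneg hu1) (by positivity)
    have hld : l * d = Real.log u / (1 + γ) := by
      rw [hl_def]; field_simp
    set L1 : ℝ := Real.log ((δ + γ) / γ) with hL1_def
    set L2 : ℝ := Real.log (1 - δ) with hL2_def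
    have hlogu : Real.log u = L1 - L2 := by
      rw [hu_def, hL1_def, hL2_def, show (δ + γ) / (γ * (1 - δ)) = ((δ + γ) / γ) / (1 - δ) by
        field_simp, Real.log_div (by positivity) (by positivity)]
    have hexpu : Real.exp (l * d * (1 + γ)) = u := by
      rw [hld, div_mul_cancel₀ _ (ne_of_gt h1γ)]
      exact Real.exp_log hu0
    have e4 : Real.exp (-(l * (σ ^ 2 / d))) = Real.exp (l * d) / u := by
      rw [eq_div_iff (ne_of_gt hu0), ← hexpu, ← Real.exp_add, hσd]
      ring_nf
    have hγu : (γ * u + 1) * (1 - δ) = 1 + γ := by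
      rw [hu_def]; field_simp; ring
    have hld2 : l * d * (1 + γ) = L1 - L2 := by
      rw [hld, hlogu]; field_simp
    clear_value γ δ u l L1 L2
    have hM : (γ * Real.exp (l * d) + Real.exp (-(l * (σ ^ 2 / d)))) / (1 + γ)
        = Real.exp (l * d - Real.log u - L2) := by
      rw [e4, Real.exp_sub, Real.exp_sub, Real.exp_log hu0, hL2_def, Real.exp_log h1δ]
      rw [div_eq_div_iff h1γ.ne' (by positivity)]
      field_simp
      linear_combination hγu
    have hpq : ((δ + γ) / (1 + γ)) / (γ / (1 + γ)) = (δ + γ) / γ := by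
      field_simp
    have hp' : (1:ℝ) - (δ + γ) / (1 + γ) = (1 - δ) / (1 + γ) := by
      field_simp [h1γ.ne']
      ring
    have h1q : (1:ℝ) - γ / (1 + γ) = 1 / (1 + γ) := by
      field_simp
      ring
    have hratio : (1 - (δ + γ) / (1 + γ)) / (1 - γ / (1 + γ)) = 1 - δ := by
      rw [hp', h1q]
      field_simp
    have hb : binRelEntropy ((δ + γ) / (1 + γ)) (γ / (1 + γ))
        = (δ + γ) / (1 + γ) * L1 + (1 - (δ + γ) / (1 + γ)) * L2 := by
      unfold binRelEntropy
      rw [hpq, hratio, hL1_def, hL2_def]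
    have E1 : Real.exp (-l * α) *
        ((γ * Real.exp (l * d) + Real.exp (-(l * (σ ^ 2 / d)))) / (1 + γ))
        = Real.exp (-(binRelEntropy ((δ + γ) / (1 + γ)) (γ / (1 + γ)))) := by
      rw [hM, ← Real.exp_add, hb]
      congr 1
      rw [hα_eq, hlogu, hp']
      field_simp
      linear_combination (1 - δ) * hld2
    have hfin : Real.exp (-l * (α * n)) *
        ((γ * Real.exp (l * d) + Real.exp (-(l * (σ ^ 2 / d)))) / (1 + γ)) ^ n
        = Real.exp (-(n * binRelEntropy ((δ + γ) / (1 + γ)) (γ / (1 + γ)))) := by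
      have h1 : Real.exp (-l * (α * n)) = (Real.exp (-l * α)) ^ n := by
        rw [← Real.exp_nat_mul]; ring_nf
      rw [h1, ← mul_pow, E1, ← Real.exp_nat_mul]; ring_nf
    refine (twoSided hmart hd hσ hl hbdd hvar (α * n)).trans (le_of_eq ?_)
    rw [← hγ_def]
    congr 1
    rw [hfin]
  · -- case δ = 1, i.e. α = d
    have hαd' : α = d := by rw [hα_eq, hδeq]; ring
    have htarget : Real.exp (-(n * binRelEntropy ((δ + γ) / (1 + γ)) (γ / (1 + γ))))
        = (γ / (1 + γ)) ^ n := by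
      rw [hδeq]
      have hp1 : ((1:ℝ) + γ) / (1 + γ) = (1:ℝ) := div_self h1γ.ne'
      have hb1 : binRelEntropy 1 (γ / (1 + γ)) = Real.log ((1 + γ) / γ) := by
        unfold binRelEntropy
        simp [one_div_div]
      rw [hp1, hb1, Real.exp_neg, Real.exp_nat_mul, Real.exp_log (by positivity),
        ← inv_pow, inv_div]
    have hstep : ∀ j : ℕ, μ {ω | α * n ≤ |Z n ω - Z 0 ω|} ≤
        ENNReal.ofReal (2 * ((γ + Real.exp (-((j:ℝ) * (d * (1 + γ))))) / (1 + γ)) ^ n) := by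
      intro j
      have hlj : (0:ℝ) ≤ (j:ℝ) := Nat.cast_nonneg j
      refine (twoSided hmart hd hσ hlj hbdd hvar (α * n)).trans ?_
      apply ENNReal.ofReal_le_ofReal
      rw [← hγ_def, hαd']
      apply mul_le_mul_of_nonneg_left _ (by norm_num : (0:ℝ) ≤ 2)
      apply le_of_eq
      have h1 : Real.exp (-(j:ℝ) * (d * n)) = (Real.exp (-(j:ℝ) * d)) ^ n := by
        rw [← Real.exp_nat_mul]; ring_nf
      rw [h1, ← mul_pow]
      congr 1
      rw [hσd, ← mul_div_assoc]
      congr 1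
      have e1 : Real.exp (-(j:ℝ) * d) * Real.exp ((j:ℝ) * d) = 1 := by
        rw [← Real.exp_add]; ring_nf; exact Real.exp_zero
      have e2 : Real.exp (-(j:ℝ) * d) * Real.exp (-((j:ℝ) * (γ * d)))
          = Real.exp (-((j:ℝ) * (d * (1 + γ)))) := by
        rw [← Real.exp_add]; ring_nf
      linear_combination γ * e1 + e2
    have hlim : Filter.Tendsto
        (fun j : ℕ => ENNReal.ofReal (2 * ((γ + Real.exp (-((j:ℝ) * (d * (1 + γ))))) / (1 + γ)) ^ n))
        Filter.atTop (nhds (ENNReal.ofReal (2 * (γ / (1 + γ)) ^ n))) := by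
      have hphi : Continuous (fun x : ℝ => ENNReal.ofReal (2 * ((γ + x) / (1 + γ)) ^ n)) := by
        exact ENNReal.continuous_ofReal.comp
          (continuous_const.mul (((continuous_const.add continuous_id).div_const (1 + γ)).pow n))
      have hx : Filter.Tendsto (fun j : ℕ => Real.exp (-((j:ℝ) * (d * (1 + γ)))))
          Filter.atTop (nhds 0) := by
        apply Real.tendsto_exp_atBot.comp
        apply Filter.tendsto_neg_atTop_atBot.comp
        exact (tendsto_natCast_atTop_atTop).atTop_mul_const (by positivity)
      have := (hphi.tendsto 0).comp hx
      simpa [Function.comp_def] using this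
    have hfinal := ge_of_tendsto' hlim hstep
    rw [htarget]
    exact hfinal
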